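/- For every ℓ : 𝒜 → ℝ the second partial derivatives of the unordered-pair preference loss L_p exist and are given by: for i ≠ j, ∂²L_p/∂ℓ(j)∂ℓ(i) = −(α²/|𝒜|²)·w_{ij}(ℓ), and for i = j, ∂²L_p/∂ℓ(i)² = (α²/|𝒜|²)·Σ_{b ≠ i} w_{ib}(ℓ), where w_{ab}(ℓ) = P_{ab}(ℓ)·(1 − P_{ab}(ℓ)). -/

import Mathlib

open Finset

/-- The logistic (sigmoid) function σ(z) = 1/(1+e^{-z}). -/
noncomputable def sigmoid (z : ℝ) : ℝ := 1 / (1 + Real.exp (-z))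

/-- Bradley–Terry target probability P*_{ab} = σ(β(Q a − Q b)). -/
noncomputable def Pstar {A : Type*} (β : ℝ) (Q : A → ℝ) (a b : A) : ℝ :=
  sigmoid (β * (Q a - Q b))

/-- Model probability P_{ab}(ℓ) = σ(α(ℓ a − ℓ b)). -/
noncomputable def Pmod {A : Type*} (α : ℝ) (ℓ : A → ℝ) (a b : A) : ℝ :=
  sigmoid (α * (ℓ a - ℓ b))

/-- Hessian weight w_{ab}(ℓ) = P_{ab}(ℓ)(1 − P_{ab}(ℓ)). -/
noncomputable def hessW {A : Type*} (α : ℝ) (ℓ : A → ℝ) (a b : A) : ℝ :=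
  Pmod α ℓ a b * (1 - Pmod α ℓ a b)

/-- Unordered-pair (distinct-pair) preference loss L_p(ℓ). -/
noncomputable def lossP {A : Type*} [Fintype A] [DecidableEq A] (α β : ℝ) (Q : A → ℝ)
    (ℓ : A → ℝ) : ℝ :=
  -(1 / ((Fintype.card A : ℝ) ^ 2)) *
    ∑ a : A, ∑ b ∈ Finset.univ.filter (fun b => b ≠ a),
      Pstar β Q a b * Real.log (Pmod α ℓ a b)

/-- The partial derivative of f with respect to the coordinate i, evaluated at ℓ. -/
noncomputable def partialD {A : Type*} [DecidableEq A] (f : (A → ℝ) → ℝ) (i : A)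
    (ℓ : A → ℝ) : ℝ :=
  deriv (fun t : ℝ => f (Function.update ℓ i t)) (ℓ i)

/- ## Auxiliary lemmas -/

lemma sigmoid_den_pos (z : ℝ) : 0 < 1 + Real.exp (-z) := by positivity

lemma sigmoid_pos (z : ℝ) : 0 < sigmoid z := by
  unfold sigmoid; positivity

lemma sigmoid_add_neg (z : ℝ) : sigmoid z + sigmoid (-z) = 1 := by
  unfold sigmoid
  rw [neg_neg]
  have h1 := (sigmoid_den_pos z).ne'
  have h2 := (sigmoid_den_pos (-z)).ne'
  rw [neg_neg] at h2
  have he : Real.exp (-z) * Real.exp z = 1 := by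
    rw [← Real.exp_add]; simp
  field_simp
  nlinarith [he]

lemma hasDerivAt_sigmoid (z : ℝ) :
    HasDerivAt sigmoid (sigmoid z * (1 - sigmoid z)) z := by
  have h : HasDerivAt (fun z : ℝ => 1 + Real.exp (-z)) (-Real.exp (-z)) z := by
    simpa using ((Real.hasDerivAt_exp (-z)).comp z (hasDerivAt_neg z)).const_add 1
  have h2 := h.inv (sigmoid_den_pos z).ne'
  have h3 : HasDerivAt sigmoid (- -Real.exp (-z) / (1 + Real.exp (-z)) ^ 2) z := by
    have hs : sigmoid = (fun z : ℝ => 1 + Real.exp (-z))⁻¹ := by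
      funext x; simp [sigmoid, one_div]
    rw [hs]; exact h2
  convert h3 using 1
  · have hd := (sigmoid_den_pos z).ne'
    unfold sigmoid
    field_simp
    ring

lemma hasDerivAt_log_sigmoid (z : ℝ) :
    HasDerivAt (fun z => Real.log (sigmoid z)) (1 - sigmoid z) z := by
  have h := (Real.hasDerivAt_log (sigmoid_pos z).ne').comp z (hasDerivAt_sigmoid z)
  refine h.congr_deriv ?_
  field_simp [(sigmoid_pos z).ne']

lemma sigmoid_neg (z : ℝ) : sigmoid (-z) = 1 - sigmoid z := by
  have := sigmoid_add_neg z; linarith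

lemma Pmod_swap {A : Type*} (α : ℝ) (ℓ : A → ℝ) (a b : A) :
    Pmod α ℓ b a = 1 - Pmod α ℓ a b := by
  unfold Pmod
  rw [show α * (ℓ b - ℓ a) = -(α * (ℓ a - ℓ b)) by ring, sigmoid_neg]

lemma hessW_symm {A : Type*} (α : ℝ) (ℓ : A → ℝ) (a b : A) :
    hessW α ℓ b a = hessW α ℓ a b := by
  unfold hessW
  rw [Pmod_swap]; ring

lemma Pstar_add {A : Type*} (β : ℝ) (Q : A → ℝ) (a b : A) :
    Pstar β Q a b + Pstar β Q b a = 1 := by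
  unfold Pstar
  rw [show β * (Q b - Q a) = -(β * (Q a - Q b)) by ring]
  exact sigmoid_add_neg _

/-- Indicator coefficient: derivative of `update ℓ i t a - update ℓ i t b` in `t`. -/
noncomputable def cind {A : Type*} [DecidableEq A] (i a b : A) : ℝ :=
  (if a = i then 1 else 0) - (if b = i then 1 else 0)

lemma hasDerivAt_arg {A : Type*} [DecidableEq A] (α : ℝ) (ℓ : A → ℝ) (i a b : A) (x : ℝ) :
    HasDerivAt (fun t => α * (Function.update ℓ i t a - Function.update ℓ i t b))
      (α * cind i a b) x := by
  have h1 : HasDerivAt (fun t : ℝ => Function.update ℓ i t a)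
      (if a = i then (1:ℝ) else 0) x := by
    simp only [Function.update_apply]
    split_ifs
    · exact hasDerivAt_id x
    · exact hasDerivAt_const x _
  have h2 : HasDerivAt (fun t : ℝ => Function.update ℓ i t b)
      (if b = i then (1:ℝ) else 0) x := by
    simp only [Function.update_apply]
    split_ifs
    · exact hasDerivAt_id x
    · exact hasDerivAt_const x _
  exact (h1.sub h2).const_mul α

/-- First partial derivative of the loss. -/
noncomputable def Dfun {A : Type*} [Fintype A] [DecidableEq A] (α β : ℝ) (Q : A → ℝ)
    (i : A) (ℓ : A → ℝ) : ℝ :=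
  -(1 / ((Fintype.card A : ℝ) ^ 2)) *
    ∑ a : A, ∑ b ∈ Finset.univ.filter (fun b => b ≠ a),
      Pstar β Q a b * ((1 - Pmod α ℓ a b) * (α * cind i a b))

lemma hasDerivAt_lossP {A : Type*} [Fintype A] [DecidableEq A] (α β : ℝ) (Q : A → ℝ)
    (i : A) (ℓ : A → ℝ) :
    HasDerivAt (fun t : ℝ => lossP α β Q (Function.update ℓ i t))
      (Dfun α β Q i ℓ) (ℓ i) := by
  unfold lossP Dfun
  apply HasDerivAt.const_mul
  apply HasDerivAt.fun_sum
  intro a _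
  apply HasDerivAt.fun_sum
  intro b _
  apply HasDerivAt.const_mul
  have harg := hasDerivAt_arg α ℓ i a b (ℓ i)
  have hlog := hasDerivAt_log_sigmoid (α * (ℓ a - ℓ b))
  rw [show α * (ℓ a - ℓ b)
      = α * (Function.update ℓ i (ℓ i) a - Function.update ℓ i (ℓ i) b) by
    simp [Function.update_eq_self]] at hlog
  have hcomp := hlog.comp (ℓ i) harg
  simp only [Pmod]
  simp only [Function.update_eq_self] at hcomp
  exact hcomp

lemma partialD_lossP {A : Type*} [Fintype A] [DecidableEq A] (α β : ℝ) (Q : A → ℝ)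
    (i : A) (ℓ : A → ℝ) :
    partialD (lossP α β Q) i ℓ = Dfun α β Q i ℓ :=
  (hasDerivAt_lossP α β Q i ℓ).deriv

/-- Second partial derivative of the loss (before algebraic simplification). -/
noncomputable def Efun {A : Type*} [Fintype A] [DecidableEq A] (α β : ℝ) (Q : A → ℝ)
    (i j : A) (ℓ : A → ℝ) : ℝ :=
  -(1 / ((Fintype.card A : ℝ) ^ 2)) *
    ∑ a : A, ∑ b ∈ Finset.univ.filter (fun b => b ≠ a),
      Pstar β Q a b * (-(hessW α ℓ a b * (α * cind j a b)) * (α * cind i a b))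

lemma hasDerivAt_Dfun {A : Type*} [Fintype A] [DecidableEq A] (α β : ℝ) (Q : A → ℝ)
    (i j : A) (ℓ : A → ℝ) :
    HasDerivAt (fun t : ℝ => Dfun α β Q i (Function.update ℓ j t))
      (Efun α β Q i j ℓ) (ℓ j) := by
  unfold Dfun Efun
  apply HasDerivAt.const_mul
  apply HasDerivAt.fun_sum
  intro a _
  apply HasDerivAt.fun_sum
  intro b _
  apply HasDerivAt.const_mul
  apply HasDerivAt.mul_const
  have harg := hasDerivAt_arg α ℓ j a b (ℓ j)
  have hsig := hasDerivAt_sigmoid (α * (ℓ a - ℓ b))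
  rw [show α * (ℓ a - ℓ b)
      = α * (Function.update ℓ j (ℓ j) a - Function.update ℓ j (ℓ j) b) by
    simp [Function.update_eq_self]] at hsig
  have hcomp := hsig.comp (ℓ j) harg
  have := hcomp.const_sub 1
  simpa [Pmod, hessW, Function.comp, mul_comm, mul_assoc, mul_left_comm] using this

lemma sum_reduce {A : Type*} [Fintype A] [DecidableEq A] (i : A) (F : A → A → ℝ)
    (hF : ∀ a b, a ≠ i → b ≠ i → F a b = 0) :
    ∑ a : A, ∑ b ∈ Finset.univ.filter (fun b => b ≠ a), F a b =
      (∑ b ∈ Finset.univ.filter (fun b => b ≠ i), F i b) +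
      ∑ a ∈ Finset.univ.filter (fun a => a ≠ i), F a i := by
  simp only [show ∀ a : A, Finset.univ.filter (fun b => b ≠ a) = Finset.univ.erase a from
    fun a => Finset.filter_ne' _ _]
  rw [← Finset.add_sum_erase Finset.univ (fun a => ∑ b ∈ Finset.univ.erase a, F a b)
    (Finset.mem_univ i)]
  congr 1
  apply Finset.sum_congr rfl
  intro a ha
  rw [Finset.mem_erase] at ha
  apply Finset.sum_eq_single_of_mem i (Finset.mem_erase.2 ⟨Ne.symm ha.1, Finset.mem_univ i⟩)
  intro b hb hbi
  rw [Finset.mem_erase] at hb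
  exact hF a b ha.1 hbi

lemma Efun_offdiag {A : Type*} [Fintype A] [DecidableEq A] (α β : ℝ) (Q : A → ℝ)
    (i j : A) (ℓ : A → ℝ) (hij : i ≠ j) :
    Efun α β Q i j ℓ = -(α ^ 2 / ((Fintype.card A : ℝ) ^ 2)) * hessW α ℓ i j := by
  unfold Efun
  rw [sum_reduce i _ (by
    intro a b ha hb
    simp [cind, ha, hb])]
  have e1 : (∑ b ∈ Finset.univ.filter (fun b => b ≠ i),
      Pstar β Q i b * (-(hessW α ℓ i b * (α * cind j i b)) * (α * cind i i b)))
      = Pstar β Q i j * (α ^ 2 * hessW α ℓ i j) := by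
    rw [Finset.sum_eq_single_of_mem j (by simp [Ne.symm hij])]
    · simp only [cind, if_neg hij, if_neg (Ne.symm hij), eq_self_iff_true, if_true]
      ring
    · intro b hb hbj
      simp [cind, hij, hbj]
  have e2 : (∑ a ∈ Finset.univ.filter (fun a => a ≠ i),
      Pstar β Q a i * (-(hessW α ℓ a i * (α * cind j a i)) * (α * cind i a i)))
      = Pstar β Q j i * (α ^ 2 * hessW α ℓ j i) := by
    rw [Finset.sum_eq_single_of_mem j (by simp [Ne.symm hij])]
    · simp only [cind, if_neg hij, if_neg (Ne.symm hij), eq_self_iff_true, if_true]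
      ring
    · intro a ha haj
      simp [cind, hij, haj]
  rw [e1, e2]
  have h1 := Pstar_add β Q i j
  have h2 := hessW_symm α ℓ i j
  linear_combination (-(α ^ 2 / ((Fintype.card A : ℝ) ^ 2)) * hessW α ℓ i j) * h1 +
    (-(α ^ 2 / ((Fintype.card A : ℝ) ^ 2)) * Pstar β Q j i) * h2

lemma Efun_diag {A : Type*} [Fintype A] [DecidableEq A] (α β : ℝ) (Q : A → ℝ)
    (i : A) (ℓ : A → ℝ) :
    Efun α β Q i i ℓ = (α ^ 2 / ((Fintype.card A : ℝ) ^ 2)) *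
      ∑ b ∈ Finset.univ.filter (fun b => b ≠ i), hessW α ℓ i b := by
  unfold Efun
  rw [sum_reduce i _ (by
    intro a b ha hb
    simp [cind, ha, hb])]
  rw [← Finset.sum_add_distrib]
  rw [Finset.sum_congr rfl (show ∀ b ∈ Finset.univ.filter (fun b => b ≠ i),
      (Pstar β Q i b * (-(hessW α ℓ i b * (α * cind i i b)) * (α * cind i i b)) +
       Pstar β Q b i * (-(hessW α ℓ b i * (α * cind i b i)) * (α * cind i b i)))
      = -(α ^ 2) * hessW α ℓ i b by
    intro b hb
    rw [Finset.mem_filter] at hb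
    have hb' := hb.2
    have h1 := Pstar_add β Q i b
    have h2 := hessW_symm α ℓ i b
    simp only [cind, if_neg hb', eq_self_iff_true, if_true]
    linear_combination (-(α ^ 2) * hessW α ℓ i b) * h1 + (-(α ^ 2) * Pstar β Q b i) * h2)]
  rw [← Finset.mul_sum]
  ring

/-- the second partial derivatives of L_p exist and are given by
∂²L_p/∂ℓ(j)∂ℓ(i) = −(α²/|𝒜|²)·w_{ij} for i ≠ j, and
∂²L_p/∂ℓ(i)² = (α²/|𝒜|²)·Σ_{b ≠ i} w_{ib}. -/
theorem stmt_10 {A : Type*} [Fintype A] [DecidableEq A] (hA : 2 ≤ Fintype.card A)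
    (Q : A → ℝ) (α β : ℝ) (hα : 0 < α) (hβ : 0 < β) (ℓ : A → ℝ) (i j : A) :
    (i ≠ j →
      HasDerivAt (fun t : ℝ => partialD (lossP α β Q) i (Function.update ℓ j t))
        (-(α ^ 2 / ((Fintype.card A : ℝ) ^ 2)) * hessW α ℓ i j) (ℓ j)) ∧
    HasDerivAt (fun t : ℝ => partialD (lossP α β Q) i (Function.update ℓ i t))
      ((α ^ 2 / ((Fintype.card A : ℝ) ^ 2)) *
        ∑ b ∈ Finset.univ.filter (fun b => b ≠ i), hessW α ℓ i b) (ℓ i) := by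
  constructor
  · intro hij
    have hfun : (fun t : ℝ => partialD (lossP α β Q) i (Function.update ℓ j t)) =
        fun t : ℝ => Dfun α β Q i (Function.update ℓ j t) :=
      funext fun t => partialD_lossP α β Q i _
    rw [hfun, ← Efun_offdiag α β Q i j ℓ hij]
    exact hasDerivAt_Dfun α β Q i j ℓ
  · have hfun : (fun t : ℝ => partialD (lossP α β Q) i (Function.update ℓ i t)) =
        fun t : ℝ => Dfun α β Q i (Function.update ℓ i t) :=
      funext fun t => partialD_lossP α β Q i _
    rw [hfun, ← Efun_diag α β Q i ℓ]
    exact hasDerivAt_Dfun α β Q i i ℓ
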